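/- In a spanning tree labeled by the SkipTree procedure (a recursion where LabelFirst(i) labels node i with the next unused integer and then calls LabelLast on each child, and LabelLast(i) calls LabelFirst on each child and then labels node i), for every i ∈ {0,...,n−1}, the unique tree path from the node labeled i to the node labeled i+1 (mod n) has length at most 3. -/

import Mathlib

/-- A finite rooted tree with ordered children. -/
inductive RTree : Type where
  | node : List RTree → RTree

namespace RTree

mutual
  /-- `LabelFirst`: the order of labeling starting from labeling the given node first and
  then processing each child by `LabelLast`.  Nodes are recorded by their address (the
  list of child indices from this node). -/
  def firstSeq : RTree → List (List ℕ)
    | node cs => [] :: lastSeqs cs 0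
  /-- `LabelLast`: process each child by `LabelFirst`, then label the given node. -/
  def lastSeq : RTree → List (List ℕ)
    | node cs => firstSeqs cs 0 ++ [[]]
  def lastSeqs : List RTree → ℕ → List (List ℕ)
    | [], _ => []
    | c :: cs, k => (lastSeq c).map (k :: ·) ++ lastSeqs cs (k + 1)
  def firstSeqs : List RTree → ℕ → List (List ℕ)
    | [], _ => []
    | c :: cs, k => (firstSeq c).map (k :: ·) ++ firstSeqs cs (k + 1)
end

end RTree

/-- Length of the longest common prefix of two node addresses. -/
def commonPrefixLen : List ℕ → List ℕ → ℕ
  | a :: as, b :: bs => if a = b then commonPrefixLen as bs + 1 else 0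
  | _, _ => 0

/-- The tree distance (number of edges on the unique tree path) between two nodes of a
rooted tree, given by their addresses. -/
def treeDist (p q : List ℕ) : ℕ :=
  (p.length - commonPrefixLen p q) + (q.length - commonPrefixLen p q)

namespace SkipAux

open RTree List

lemma treeDist_le (p q : List ℕ) : treeDist p q ≤ p.length + q.length :=
  Nat.add_le_add (Nat.sub_le _ _) (Nat.sub_le _ _)

lemma treeDist_cons (k : ℕ) (p q : List ℕ) : treeDist (k :: p) (k :: q) = treeDist p q := by
  simp [treeDist, commonPrefixLen, Nat.succ_sub_succ]

/-- The relation: addresses at tree distance at most 3. -/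
def R (p q : List ℕ) : Prop := treeDist p q ≤ 3

lemma firstSeq_head (t : RTree) : (firstSeq t).head? = some [] := by
  cases t with | node cs => simp [firstSeq]

lemma firstSeq_ne_nil (t : RTree) : firstSeq t ≠ [] := by
  intro hn; have := firstSeq_head t; rw [hn] at this; simp at this

lemma lastSeq_getLast (t : RTree) : (lastSeq t).getLast? = some [] := by
  cases t with | node cs => simp [lastSeq]

lemma lastSeq_ne_nil (t : RTree) : lastSeq t ≠ [] := by
  intro hn; have := lastSeq_getLast t; rw [hn] at this; simp at this

mutual

theorem chain_firstSeq (t : RTree) :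
    Chain' R (firstSeq t) ∧ ∀ l ∈ (firstSeq t).getLast?, l.length ≤ 1 := by
  cases t with
  | node cs =>
    have hls := chain_lastSeqs cs 0
    rw [firstSeq]
    constructor
    · rw [Chain', isChain_cons]
      refine ⟨fun y hy => ?_, hls.1⟩
      have hy2 := hls.2.1 y hy
      have := treeDist_le [] y
      simp only [List.length_nil] at this
      unfold R; omega
    · intro l hl
      rcases hcs : lastSeqs cs 0 with _ | ⟨a, as⟩
      · rw [hcs] at hl; simp at hl; subst hl; simp
      · rw [hcs, List.getLast?_cons_cons] at hl
        exact hls.2.2.1 l (by rw [hcs]; exact hl)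

theorem chain_lastSeq (t : RTree) :
    Chain' R (lastSeq t) ∧ ∀ l ∈ (lastSeq t).head?, l.length ≤ 1 := by
  cases t with
  | node cs =>
    have hfs := chain_firstSeqs cs 0
    rw [lastSeq]
    constructor
    · rw [Chain', isChain_append]
      refine ⟨hfs.1, by simp, fun x hx y hy => ?_⟩
      simp only [List.head?_cons, Option.mem_def, Option.some.injEq] at hy
      subst hy
      have hx2 := hfs.2.2.1 x hx
      have := treeDist_le x []
      simp only [List.length_nil] at this
      unfold R; omega
    · intro l hl
      rcases cs with _ | ⟨c, cs⟩
      · rw [firstSeqs] at hl; simp at hl; subst hl; simp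
      · have hne : firstSeqs (c :: cs) 0 ≠ [] := hfs.2.2.2 (by simp)
        rw [List.head?_append] at hl
        rcases hh : (firstSeqs (c :: cs) 0).head? with _ | a
        · exact absurd (List.head?_eq_none_iff.mp hh) hne
        · rw [hh] at hl; simp at hl; subst hl
          exact hfs.2.1 _ hh

theorem chain_lastSeqs (cs : List RTree) (k : ℕ) :
    Chain' R (lastSeqs cs k) ∧ (∀ l ∈ (lastSeqs cs k).head?, l.length ≤ 2) ∧
      (∀ l ∈ (lastSeqs cs k).getLast?, l.length ≤ 1) ∧ (cs ≠ [] → lastSeqs cs k ≠ []) := by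
  cases cs with
  | nil => rw [lastSeqs]; simp [Chain']
  | cons c cs =>
    have hc := chain_lastSeq c
    have hcs := chain_lastSeqs cs (k + 1)
    rw [lastSeqs]
    have hmapne : (lastSeq c).map (k :: ·) ≠ [] := by
      simp [lastSeq_ne_nil c]
    have hmaplast : ((lastSeq c).map (k :: ·)).getLast? = some [k] := by
      rw [List.getLast?_map, lastSeq_getLast]; rfl
    refine ⟨?_, ?_, ?_, ?_⟩
    · rw [Chain', isChain_append]
      refine ⟨?_, hcs.1, fun x hx y hy => ?_⟩
      · rw [isChain_map]
        refine (hc.1).imp fun a b hab => ?_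
        unfold R at *; rw [treeDist_cons]; exact hab
      · rw [hmaplast] at hx; simp at hx; subst hx
        have hy2 := hcs.2.1 y hy
        have := treeDist_le [k] y
        simp only [List.length_cons, List.length_nil] at this
        unfold R; omega
    · intro l hl
      rw [List.head?_append, List.head?_map] at hl
      rcases hh : (lastSeq c).head? with _ | a
      · exact absurd (List.head?_eq_none_iff.mp hh) (lastSeq_ne_nil c)
      · rw [hh] at hl; simp at hl
        have := hc.2 a hh
        rw [← hl]; simp; omega
    · intro l hl
      rcases hcs0 : cs with _ | ⟨c', cs'⟩
      · subst hcs0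
        rw [lastSeqs, List.append_nil, hmaplast] at hl
        simp at hl; subst hl; simp
      · have hne : lastSeqs cs (k + 1) ≠ [] := by
          rw [hcs0]; exact (chain_lastSeqs (c' :: cs') (k+1)).2.2.2 (by simp)
        rw [List.getLast?_append] at hl
        rcases hh : (lastSeqs cs (k + 1)).getLast? with _ | a
        · exact absurd (List.getLast?_eq_none_iff.mp hh) hne
        · rw [hh] at hl; simp at hl; subst hl
          exact hcs.2.2.1 _ hh
    · intro _
      simp [hmapne]

theorem chain_firstSeqs (cs : List RTree) (k : ℕ) :
    Chain' R (firstSeqs cs k) ∧ (∀ l ∈ (firstSeqs cs k).head?, l.length ≤ 1) ∧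
      (∀ l ∈ (firstSeqs cs k).getLast?, l.length ≤ 2) ∧ (cs ≠ [] → firstSeqs cs k ≠ []) := by
  cases cs with
  | nil => rw [firstSeqs]; simp [Chain']
  | cons c cs =>
    have hc := chain_firstSeq c
    have hcs := chain_firstSeqs cs (k + 1)
    rw [firstSeqs]
    have hmapne : (firstSeq c).map (k :: ·) ≠ [] := by
      simp [firstSeq_ne_nil c]
    have hmaphead : ((firstSeq c).map (k :: ·)).head? = some [k] := by
      rw [List.head?_map, firstSeq_head]; rfl
    have hmaplast : ∀ l ∈ ((firstSeq c).map (k :: ·)).getLast?, l.length ≤ 2 := by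
      intro l hl
      rw [List.getLast?_map] at hl
      rcases hh : (firstSeq c).getLast? with _ | a
      · exact absurd (List.getLast?_eq_none_iff.mp hh) (firstSeq_ne_nil c)
      · rw [hh] at hl; simp at hl
        have := hc.2 a hh
        rw [← hl]; simp; omega
    refine ⟨?_, ?_, ?_, ?_⟩
    · rw [Chain', isChain_append]
      refine ⟨?_, hcs.1, fun x hx y hy => ?_⟩
      · rw [isChain_map]
        refine (hc.1).imp fun a b hab => ?_
        unfold R at *; rw [treeDist_cons]; exact hab
      · have hx2 := hmaplast x hx
        have hy2 := hcs.2.1 y hy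
        have := treeDist_le x y
        unfold R; omega
    · intro l hl
      rw [List.head?_append, hmaphead] at hl
      simp at hl; subst hl; simp
    · intro l hl
      rcases hcs0 : cs with _ | ⟨c', cs'⟩
      · subst hcs0
        rw [firstSeqs, List.append_nil] at hl
        exact hmaplast l hl
      · have hne : firstSeqs cs (k + 1) ≠ [] := by
          rw [hcs0]; exact (chain_firstSeqs (c' :: cs') (k+1)).2.2.2 (by simp)
        rw [List.getLast?_append] at hl
        rcases hh : (firstSeqs cs (k + 1)).getLast? with _ | a
        · exact absurd (List.getLast?_eq_none_iff.mp hh) hne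
        · rw [hh] at hl; simp at hl; subst hl
          exact hcs.2.2.1 _ hh
    · intro _
      simp [hmapne]

end

end SkipAux

/-- In the SkipTree labeling of a rooted tree on `n > 1` nodes (root
processed by `LabelFirst`), for every `i` the tree path from the node labeled `i` to the
node labeled `i + 1 (mod n)` has length at most `3`. -/
theorem skipTree_path_length_le_three (t : RTree)
    (h : 1 < (RTree.firstSeq t).length) (i : Fin (RTree.firstSeq t).length) :
    treeDist ((RTree.firstSeq t).get i)
      ((RTree.firstSeq t).get
        ⟨((i : ℕ) + 1) % (RTree.firstSeq t).length,
          Nat.mod_lt _ (Nat.lt_of_le_of_lt (Nat.zero_le _) h)⟩) ≤ 3 := by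
  have hchain := (SkipAux.chain_firstSeq t).1
  have hlastlen := (SkipAux.chain_firstSeq t).2
  have hhead := SkipAux.firstSeq_head t
  rcases Nat.lt_or_ge ((i : ℕ) + 1) (RTree.firstSeq t).length with hlt | hge
  · have hmod : ((i : ℕ) + 1) % (RTree.firstSeq t).length = (i : ℕ) + 1 :=
      Nat.mod_eq_of_lt hlt
    have key := (List.isChain_iff_getElem.mp hchain) (i : ℕ) (by omega)
    simp only [List.get_eq_getElem] at key ⊢
    simp only [hmod]
    exact key
  · have hi : (i : ℕ) = (RTree.firstSeq t).length - 1 := by have := i.2; omega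
    have hmod : ((i : ℕ) + 1) % (RTree.firstSeq t).length = 0 := by
      rw [hi]
      have h2 : (RTree.firstSeq t).length - 1 + 1 = (RTree.firstSeq t).length := by omega
      rw [h2, Nat.mod_self]
    simp only [List.get_eq_getElem]
    simp only [hmod]
    have hget0 : (RTree.firstSeq t)[(0:ℕ)]'(by omega) = [] := by
      have h0 := hhead
      rw [List.head?_eq_getElem?, List.getElem?_eq_getElem (by omega)] at h0
      simpa using h0
    have hgetlast : ((RTree.firstSeq t)[(i:ℕ)]'i.2).length ≤ 1 := by
      apply hlastlen
      rw [List.getLast?_eq_getElem?,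
        List.getElem?_eq_getElem (by omega : (RTree.firstSeq t).length - 1 < (RTree.firstSeq t).length)]
      simp only [Option.mem_def, Option.some.injEq]
      congr 1
      omega
    rw [hget0]
    have := SkipAux.treeDist_le ((RTree.firstSeq t)[(i:ℕ)]'i.2) []
    simp only [List.length_nil] at this
    omega
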